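/- Let G be a connected undirected graph on the vertex set {1,…,L}, let η > 0, and let W ∈ ℝ^{L×L} be a doubly stochastic matrix such that w_{ii} ≥ η for all i, w_{ij} ≥ η whenever {i,j} is an edge of G, and w_{ij} = 0 whenever i ≠ j and {i,j} is not an edge of G. Then for every integer s ≥ 1 and all i, j ∈ {1,…,L}, ([W^s]_{ij} − 1/L)² ≤ (1 − η/(2L²))^{s−1}. -/

import Mathlib

open Matrix Finset

lemma getVert_injOn' {V : Type*} {G : SimpleGraph V} {u v : V} {p : G.Walk u v}
    (hp : p.IsPath) :
    ∀ m, m ≤ p.length → ∀ n, n ≤ p.length → p.getVert m = p.getVert n → m = n := by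
  induction p with
  | nil => intro m hm n hn _; simp at hm hn; omega
  | @cons a b c h q ih =>
    rw [SimpleGraph.Walk.cons_isPath_iff] at hp
    intro m hm n hn he
    simp only [SimpleGraph.Walk.length_cons] at hm hn
    match m, n with
    | 0, 0 => rfl
    | 0, n+1 =>
      exfalso
      apply hp.2
      rw [SimpleGraph.Walk.mem_support_iff_exists_getVert]
      refine ⟨n, ?_, by omega⟩
      rw [← SimpleGraph.Walk.getVert_cons_succ q h, ← he, SimpleGraph.Walk.getVert_zero]
    | m+1, 0 =>
      exfalso
      apply hp.2
      rw [SimpleGraph.Walk.mem_support_iff_exists_getVert]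
      refine ⟨m, ?_, by omega⟩
      rw [← SimpleGraph.Walk.getVert_cons_succ q h, he, SimpleGraph.Walk.getVert_zero]
    | m+1, n+1 =>
      have := ih hp.1 m (by omega) n (by omega)
        (by simpa [SimpleGraph.Walk.getVert_cons_succ] using he)
      omega

lemma expand_var (L : ℕ) (z : Fin L → ℝ) (μ : ℝ) (hz : ∑ i, z i = L * μ) :
    ∑ i, (z i - μ)^2 = ∑ i, (z i)^2 - L * μ^2 := by
  have h1 : ∑ i, (z i - μ)^2 = ∑ i, ((z i)^2 - 2*μ*(z i) + μ^2) :=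
    Finset.sum_congr rfl (fun i _ => by ring)
  rw [h1, Finset.sum_add_distrib, Finset.sum_sub_distrib, ← Finset.mul_sum, hz,
    Finset.sum_const, Finset.card_univ, Fintype.card_fin, nsmul_eq_mul]
  ring

lemma contraction
    (L : ℕ) (G : SimpleGraph (Fin L)) (hG : G.Connected)
    (η : ℝ) (hη : 0 < η) (W : Matrix (Fin L) (Fin L) ℝ)
    (hW_nonneg : ∀ i j, 0 ≤ W i j)
    (hW_row : ∀ i, ∑ j, W i j = 1)
    (hW_col : ∀ j, ∑ i, W i j = 1)
    (hW_diag : ∀ i, η ≤ W i i)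
    (hW_adj : ∀ i j, G.Adj i j → η ≤ W i j)
    (x : Fin L → ℝ) (μ : ℝ) (hμ : (∑ i, x i) = L * μ) :
    ∑ i, (∑ j, W i j * x j - μ)^2 ≤ (1 - η/(2*(L:ℝ)^2)) * ∑ i, (x i - μ)^2 := by
  have hLpos : 0 < L := by
    rcases hG.nonempty with ⟨i⟩; exact i.pos
  have hL1 : (1:ℝ) ≤ L := by exact_mod_cast hLpos
  set y : Fin L → ℝ := fun i => ∑ j, W i j * x j with hy
  have hy_sum : ∑ i, y i = L * μ := by
    rw [← hμ, Finset.sum_comm]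
    calc ∑ j, ∑ i, W i j * x j = ∑ j, (∑ i, W i j) * x j := by
          simp [Finset.sum_mul]
      _ = ∑ j, x j := by simp [hW_col]
  set D : ℝ := ∑ i, ∑ j, W i j * (x j - y i)^2 with hDdef
  have hD_nonneg : 0 ≤ D := by
    apply Finset.sum_nonneg; intro i _
    apply Finset.sum_nonneg; intro j _
    exact mul_nonneg (hW_nonneg i j) (sq_nonneg _)
  have hD : D = ∑ i, (x i)^2 - ∑ i, (y i)^2 := by
    have h1 : ∀ i, ∑ j, W i j * (x j - y i)^2 = (∑ j, W i j * (x j)^2) - (y i)^2 := by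
      intro i
      have h2 : ∑ j, W i j * (x j - y i)^2
          = ∑ j, (W i j * (x j)^2 - (2 * y i) * (W i j * x j) + (y i)^2 * W i j) :=
        Finset.sum_congr rfl fun j _ => by ring
      rw [h2, Finset.sum_add_distrib, Finset.sum_sub_distrib, ← Finset.mul_sum,
        ← Finset.mul_sum, hW_row i]
      have hyi : ∑ j, W i j * x j = y i := rfl
      rw [hyi]; ring
    rw [hDdef, Finset.sum_congr rfl (fun i _ => h1 i), Finset.sum_sub_distrib]
    congr 1
    rw [Finset.sum_comm]
    calc ∑ j, ∑ i, W i j * (x j)^2 = ∑ j, (∑ i, W i j) * (x j)^2 := by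
          simp [Finset.sum_mul]
      _ = ∑ j, (x j)^2 := by simp [hW_col]
  obtain ⟨a, -, ha⟩ := Finset.exists_max_image (univ : Finset (Fin L)) x ⟨⟨0, hLpos⟩, mem_univ _⟩
  obtain ⟨b, -, hb⟩ := Finset.exists_min_image (univ : Finset (Fin L)) x ⟨⟨0, hLpos⟩, mem_univ _⟩
  have hμab : x b ≤ μ ∧ μ ≤ x a := by
    constructor
    · have h3 : (L:ℝ) * x b ≤ (L:ℝ) * μ := by
        rw [← hμ]
        calc (L:ℝ) * x b = ∑ _i : Fin L, x b := by
              simp [Finset.sum_const, Finset.card_univ, mul_comm]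
          _ ≤ ∑ i, x i := Finset.sum_le_sum (fun i _ => hb i (mem_univ i))
      exact le_of_mul_le_mul_left h3 (by positivity)
    · have h3 : (L:ℝ) * μ ≤ (L:ℝ) * x a := by
        rw [← hμ]
        calc ∑ i, x i ≤ ∑ _i : Fin L, x a := Finset.sum_le_sum (fun i _ => ha i (mem_univ i))
          _ = (L:ℝ) * x a := by simp [Finset.sum_const, Finset.card_univ, mul_comm]
      exact le_of_mul_le_mul_left h3 (by positivity)
  have hVx_le : ∑ i, (x i - μ)^2 ≤ L * (x a - x b)^2 := by
    calc ∑ i, (x i - μ)^2 ≤ ∑ _i : Fin L, (x a - x b)^2 := by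
          apply Finset.sum_le_sum; intro i _
          apply sq_le_sq'
          · nlinarith [ha i (mem_univ i), hb i (mem_univ i), hμab.1, hμab.2]
          · nlinarith [ha i (mem_univ i), hb i (mem_univ i), hμab.1, hμab.2]
      _ = L * (x a - x b)^2 := by simp [Finset.sum_const, Finset.card_univ, mul_comm]
  have hD_ge : η * (x a - x b)^2 / (2 * L) ≤ D := by
    rcases eq_or_ne (x a) (x b) with heq | hne
    · rw [heq]; simpa using hD_nonneg
    · have hab : a ≠ b := fun h => hne (by rw [h])
      obtain ⟨w⟩ := hG.preconnected b a
      set p := w.bypass with hp_def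
      have hp : p.IsPath := w.bypass_isPath
      set n := p.length with hn
      have hnL : n < L := by
        have := hp.length_lt
        simpa [Fintype.card_fin] using this
      have hn1 : 1 ≤ n := by
        by_contra h
        push_neg at h
        interval_cases n
        exact hab (SimpleGraph.Walk.eq_of_length_eq_zero hn.symm).symm
      have htel : ∑ t ∈ Finset.range n, (x (p.getVert (t+1)) - x (p.getVert t)) = x a - x b := by
        rw [Finset.sum_range_sub (fun t => x (p.getVert t)), hn,
          SimpleGraph.Walk.getVert_length, SimpleGraph.Walk.getVert_zero]
      have hCS : (x a - x b)^2
          ≤ (L:ℝ) * ∑ t ∈ Finset.range n, (x (p.getVert (t+1)) - x (p.getVert t))^2 := by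
        calc (x a - x b)^2
            = (∑ t ∈ Finset.range n, (x (p.getVert (t+1)) - x (p.getVert t)))^2 := by rw [htel]
          _ ≤ (Finset.range n).card * ∑ t ∈ Finset.range n, (x (p.getVert (t+1)) - x (p.getVert t))^2 :=
              sq_sum_le_card_mul_sum_sq
          _ ≤ (L:ℝ) * ∑ t ∈ Finset.range n, (x (p.getVert (t+1)) - x (p.getVert t))^2 := by
              apply mul_le_mul_of_nonneg_right
              · simp only [Finset.card_range]
                exact_mod_cast hnL.le
              · exact Finset.sum_nonneg fun t _ => sq_nonneg _
      set g : Fin L → Fin L → ℝ := fun i j => W i j * (x j - y i)^2 with hg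
      have hedge : ∀ t ∈ Finset.range n, (η/2) * (x (p.getVert (t+1)) - x (p.getVert t))^2
          ≤ g (p.getVert t) (p.getVert t) + g (p.getVert t) (p.getVert (t+1)) := by
        intro t ht
        rw [Finset.mem_range] at ht
        have hadj := p.adj_getVert_succ (show t < p.length by omega)
        have h1 := hW_diag (p.getVert t)
        have h2 := hW_adj _ _ hadj
        show (η/2) * (x (p.getVert (t+1)) - x (p.getVert t))^2
          ≤ W (p.getVert t) (p.getVert t) * (x (p.getVert t) - y (p.getVert t))^2
            + W (p.getVert t) (p.getVert (t+1)) * (x (p.getVert (t+1)) - y (p.getVert t))^2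
        nlinarith [sq_nonneg (x (p.getVert t) - y (p.getVert t)),
          sq_nonneg (x (p.getVert (t+1)) - y (p.getVert t)),
          sq_nonneg (x (p.getVert (t+1)) + x (p.getVert t) - 2 * y (p.getVert t))]
      have hinj : ∀ m, m ≤ n → ∀ k, k ≤ n → p.getVert m = p.getVert k → m = k :=
        getVert_injOn' hp
      have hsum_diag : ∑ t ∈ Finset.range n, g (p.getVert t) (p.getVert t)
          = ∑ q ∈ (Finset.range n).image (fun t => (p.getVert t, p.getVert t)), g q.1 q.2 := by
        rw [Finset.sum_image]
        intro s hs t ht hst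
        rw [Finset.mem_coe, Finset.mem_range] at hs ht
        rw [Prod.mk.injEq] at hst
        exact hinj s (by omega) t (by omega) hst.1
      have hsum_off : ∑ t ∈ Finset.range n, g (p.getVert t) (p.getVert (t+1))
          = ∑ q ∈ (Finset.range n).image (fun t => (p.getVert t, p.getVert (t+1))), g q.1 q.2 := by
        rw [Finset.sum_image]
        intro s hs t ht hst
        rw [Finset.mem_coe, Finset.mem_range] at hs ht
        rw [Prod.mk.injEq] at hst
        exact hinj s (by omega) t (by omega) hst.1
      have hdisj : Disjoint ((Finset.range n).image (fun t => (p.getVert t, p.getVert t)))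
          ((Finset.range n).image (fun t => (p.getVert t, p.getVert (t+1)))) := by
        rw [Finset.disjoint_left]
        rintro ⟨u, v⟩ h1 h2
        simp only [Finset.mem_image, Finset.mem_range] at h1 h2
        obtain ⟨s, hs, hs2⟩ := h1
        obtain ⟨t, ht, ht2⟩ := h2
        rw [Prod.mk.injEq] at hs2 ht2
        have hadj := p.adj_getVert_succ (show t < p.length by omega)
        exact hadj.ne (by rw [ht2.1, ← hs2.1, hs2.2, ← ht2.2])
      have hsum_le : ∑ t ∈ Finset.range n,
          (g (p.getVert t) (p.getVert t) + g (p.getVert t) (p.getVert (t+1))) ≤ D := by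
        rw [Finset.sum_add_distrib, hsum_diag, hsum_off, ← Finset.sum_union hdisj]
        have hDprod : D = ∑ q ∈ (univ : Finset (Fin L)) ×ˢ univ, g q.1 q.2 := by
          rw [Finset.sum_product]
        rw [hDprod]
        apply Finset.sum_le_sum_of_subset_of_nonneg
        · intro q _; exact Finset.mem_product.2 ⟨mem_univ _, mem_univ _⟩
        · intro q _ _; exact mul_nonneg (hW_nonneg _ _) (sq_nonneg _)
      have hhalf : (η/2) * ∑ t ∈ Finset.range n, (x (p.getVert (t+1)) - x (p.getVert t))^2 ≤ D := by
        rw [Finset.mul_sum]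
        exact le_trans (Finset.sum_le_sum hedge) hsum_le
      rw [div_le_iff₀ (by positivity)]
      nlinarith [mul_le_mul_of_nonneg_left hCS (le_of_lt (half_pos hη)),
        mul_le_mul_of_nonneg_left hhalf (show (0:ℝ) ≤ 2 * L by positivity)]
  have hVy : ∑ i, (y i - μ)^2 = ∑ i, (x i - μ)^2 - D := by
    rw [expand_var L y μ hy_sum, expand_var L x μ hμ, hD]; ring
  show ∑ i, (y i - μ)^2 ≤ (1 - η/(2*(L:ℝ)^2)) * ∑ i, (x i - μ)^2
  rw [hVy]
  have hVx_nonneg : 0 ≤ ∑ i, (x i - μ)^2 := Finset.sum_nonneg fun i _ => sq_nonneg _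
  have h1 : η/(2*(L:ℝ)^2) * ∑ i, (x i - μ)^2 ≤ D := by
    calc η/(2*(L:ℝ)^2) * ∑ i, (x i - μ)^2
        ≤ η/(2*(L:ℝ)^2) * ((L:ℝ) * (x a - x b)^2) :=
          mul_le_mul_of_nonneg_left hVx_le (by positivity)
      _ = η * (x a - x b)^2 / (2 * L) := by
          field_simp
      _ ≤ D := hD_ge
  linarith


/-- for a doubly stochastic weight matrix compatible with a connected
communication graph, every entry of `W^s` is close to `1/L`:
`([W^s]_{ij} − 1/L)² ≤ (1 − η/(2L²))^{s−1}`. -/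
theorem doubly_stochastic_power_entry_bound
    (L : ℕ) (G : SimpleGraph (Fin L)) (hG : G.Connected)
    (η : ℝ) (hη : 0 < η) (W : Matrix (Fin L) (Fin L) ℝ)
    (hW_nonneg : ∀ i j, 0 ≤ W i j)
    (hW_row : ∀ i, ∑ j, W i j = 1)
    (hW_col : ∀ j, ∑ i, W i j = 1)
    (hW_diag : ∀ i, η ≤ W i i)
    (hW_adj : ∀ i j, G.Adj i j → η ≤ W i j)
    (hW_zero : ∀ i j, i ≠ j → ¬ G.Adj i j → W i j = 0) :
    ∀ s : ℕ, 1 ≤ s → ∀ i j,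
      ((W ^ s) i j - 1 / (L : ℝ)) ^ 2 ≤ (1 - η / (2 * (L : ℝ) ^ 2)) ^ (s - 1) := by
  have hLpos : 0 < L := by rcases hG.nonempty with ⟨i⟩; exact i.pos
  have hLR : (0:ℝ) < L := by exact_mod_cast hLpos
  have hη1 : η ≤ 1 := by
    have i0 : Fin L := ⟨0, hLpos⟩
    calc η ≤ W i0 i0 := hW_diag i0
      _ ≤ ∑ j, W i0 j := Finset.single_le_sum (fun j _ => hW_nonneg i0 j) (mem_univ i0)
      _ = 1 := hW_row i0
  set δ : ℝ := η / (2 * (L:ℝ)^2) with hδ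
  have hδ0 : 0 ≤ δ := by positivity
  have hδ1 : δ ≤ 1 := by
    have hL1 : (1:ℝ) ≤ L := by exact_mod_cast hLpos
    rw [hδ, div_le_one (by positivity)]
    nlinarith [hη1, hL1, mul_le_mul hL1 hL1 zero_le_one (le_trans zero_le_one hL1)]
  -- entrywise nonneg of powers
  have hpow_nonneg : ∀ s i j, 0 ≤ (W ^ s) i j := by
    intro s
    induction s with
    | zero => intro i j; simp [Matrix.one_apply]; split <;> norm_num
    | succ s ih =>
      intro i j
      rw [pow_succ', Matrix.mul_apply]
      exact Finset.sum_nonneg fun k _ => mul_nonneg (hW_nonneg i k) (ih k j)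
  -- column sums of powers
  have hcol : ∀ s j, ∑ i, (W ^ s) i j = 1 := by
    intro s
    induction s with
    | zero => intro j; simp [Matrix.one_apply]
    | succ s ih =>
      intro j
      have : ∀ i, (W ^ (s+1)) i j = ∑ k, W i k * (W ^ s) k j := by
        intro i; rw [pow_succ', Matrix.mul_apply]
      rw [Finset.sum_congr rfl fun i _ => this i, Finset.sum_comm]
      calc ∑ k, ∑ i, W i k * (W ^ s) k j
          = ∑ k, (∑ i, W i k) * (W ^ s) k j := by simp [Finset.sum_mul]
        _ = ∑ k, (W ^ s) k j := by simp [hW_col]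
        _ = 1 := ih j
  -- variance of any column is at most 1
  have hsum_col : ∀ s j, (∑ i, (W ^ s) i j) = (L:ℝ) * (1 / L) := by
    intro s j; rw [hcol s j]; field_simp
  have hVle1 : ∀ s j, ∑ i, ((W ^ s) i j - 1/(L:ℝ))^2 ≤ 1 := by
    intro s j
    rw [expand_var L (fun i => (W ^ s) i j) (1/(L:ℝ)) (hsum_col s j)]
    have h1 : ∑ i, ((W ^ s) i j)^2 ≤ ∑ i, (W ^ s) i j := by
      apply Finset.sum_le_sum
      intro i _
      have hle1 : (W ^ s) i j ≤ 1 := by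
        calc (W ^ s) i j ≤ ∑ k, (W ^ s) k j :=
              Finset.single_le_sum (fun k _ => hpow_nonneg s k j) (mem_univ i)
          _ = 1 := hcol s j
      nlinarith [hpow_nonneg s i j]
    have h2 : (0:ℝ) ≤ (L:ℝ) * (1/(L:ℝ))^2 := by positivity
    calc ∑ i, ((W ^ s) i j)^2 - (L:ℝ) * (1/(L:ℝ))^2
        ≤ ∑ i, ((W ^ s) i j)^2 := by linarith
      _ ≤ ∑ i, (W ^ s) i j := h1
      _ = 1 := hcol s j
  -- contraction step
  have hstep : ∀ s j, ∑ i, ((W ^ (s+1)) i j - 1/(L:ℝ))^2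
      ≤ (1 - δ) * ∑ i, ((W ^ s) i j - 1/(L:ℝ))^2 := by
    intro s j
    have h := contraction L G hG η hη W hW_nonneg hW_row hW_col hW_diag hW_adj
      (fun k => (W ^ s) k j) (1/(L:ℝ)) (hsum_col s j)
    have heq : ∀ i, (W ^ (s+1)) i j = ∑ k, W i k * (W ^ s) k j := by
      intro i; rw [pow_succ', Matrix.mul_apply]
    calc ∑ i, ((W ^ (s+1)) i j - 1/(L:ℝ))^2
        = ∑ i, (∑ k, W i k * (W ^ s) k j - 1/(L:ℝ))^2 :=
          Finset.sum_congr rfl fun i _ => by rw [heq i]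
      _ ≤ (1 - δ) * ∑ i, ((W ^ s) i j - 1/(L:ℝ))^2 := h
  -- variance bound by induction
  have hVbound : ∀ s, 1 ≤ s → ∀ j, ∑ i, ((W ^ s) i j - 1/(L:ℝ))^2 ≤ (1 - δ)^(s-1) := by
    intro s
    induction s with
    | zero => intro h; omega
    | succ s ih =>
      intro _ j
      rcases Nat.eq_or_lt_of_le (Nat.zero_le s) with h0 | h1
      · simp only [← h0]
        simpa using hVle1 1 j
      · have hs1 : 1 ≤ s := h1
        calc ∑ i, ((W ^ (s+1)) i j - 1/(L:ℝ))^2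
            ≤ (1 - δ) * ∑ i, ((W ^ s) i j - 1/(L:ℝ))^2 := hstep s j
          _ ≤ (1 - δ) * (1 - δ)^(s-1) := by
              apply mul_le_mul_of_nonneg_left (ih hs1 j) (by linarith)
          _ = (1 - δ)^(s-1+1) := by rw [pow_succ]; ring
          _ = (1 - δ)^(s+1-1) := by congr 1; omega
  intro s hs i j
  calc ((W ^ s) i j - 1/(L:ℝ))^2
      ≤ ∑ k, ((W ^ s) k j - 1/(L:ℝ))^2 :=
        Finset.single_le_sum (f := fun k => ((W ^ s) k j - 1/(L:ℝ))^2)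
          (fun k _ => sq_nonneg _) (mem_univ i)
    _ ≤ (1 - δ)^(s-1) := hVbound s hs j
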